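/- arXiv:1006.4536 — 3 statements merged into one kernel-verified Lean document; each statement's English description precedes it below -/
import Mathlib

section
/- There exist a universal constant c > 0 and d_0 such that for every d ≥ d_0 and every 0-extension f of the graph G_d with terminal set K, the 0-extension cost satisfies Σ_{(u,v)∈E} c(u,v) · D(f(u), f(v)) ≥ c · k · d^{3/2}, where k = 2^d. -/
open Finset

/-- Vertices of the `d`-dimensional Boolean hypercube. -/
abbrev Cube (d : ℕ) := Fin d → Bool

/-- Hamming distance between two Boolean strings. -/
def hamm {d : ℕ} (s t : Cube d) : ℕ := (Finset.univ.filter fun i => s i ≠ t i).card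

/-- The vertex set of the graph `G_d`: `Sum.inl s` is the hypercube vertex `y_s`,
`Sum.inr s` is the terminal `z_s`. -/
abbrev Vtx (d : ℕ) := Cube d ⊕ Cube d

/-- Edge capacities of the graph `G_d`: hypercube edges (Hamming distance `1`) have
capacity `1`, each terminal `z_s` is attached to `y_s` by an edge of capacity `√d`. -/
noncomputable def gCap (d : ℕ) : Vtx d → Vtx d → ℝ
  | Sum.inl s, Sum.inl t => if hamm s t = 1 then 1 else 0
  | Sum.inl s, Sum.inr t => if s = t then Real.sqrt d else 0
  | Sum.inr s, Sum.inl t => if s = t then Real.sqrt d else 0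
  | Sum.inr _, Sum.inr _ => 0

/-- The cut function of a capacitated graph: total capacity of edges crossing `A`.
(Each unordered crossing edge `{u,v}` with `u ∈ A`, `v ∉ A` is counted once.) -/
noncomputable def cutFun {V : Type*} [Fintype V] [DecidableEq V]
    (c : V → V → ℝ) (A : Finset V) : ℝ :=
  ∑ u ∈ A, ∑ v ∈ Aᶜ, c u v

/-- The terminal set `K = {z_s}` of `G_d`. -/
def Kset (d : ℕ) : Finset (Vtx d) := Finset.univ.image Sum.inr

/-- The terminal cut function: `h_K(U) = min { h(A) : A ∩ K = U }`. -/
noncomputable def termCut {V : Type*} [Fintype V] [DecidableEq V]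
    (c : V → V → ℝ) (K U : Finset V) : ℝ :=
  sInf {x : ℝ | ∃ A : Finset V, A ∩ K = U ∧ cutFun c A = x}

/-- The terminal cut function of `G_d`, for a set `A` of terminals (identified with
Boolean strings). -/
noncomputable def hK (d : ℕ) (A : Finset (Cube d)) : ℝ :=
  termCut (gCap d) (Kset d) (A.image Sum.inr)

/-- The metric `D` on terminals: `D(z_s, z_t) = Hamm(s,t) + 2√d` for `s ≠ t`. -/
noncomputable def Dmet (d : ℕ) (s t : Cube d) : ℝ :=
  if s = t then 0 else hamm s t + 2 * Real.sqrt d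


namespace ZeroExtAux
open Finset

variable {d : ℕ}

lemma hamm_eq_sum (s t : Cube d) : hamm s t = ∑ i, if s i = t i then 0 else 1 := by
  rw [hamm, Finset.card_filter]
  exact Finset.sum_congr rfl fun i _ => by by_cases h : s i = t i <;> simp [h]

lemma hamm_comm (s t : Cube d) : hamm s t = hamm t s := by
  simp only [hamm_eq_sum]
  exact Finset.sum_congr rfl fun i _ => by by_cases h : s i = t i <;> simp [h, eq_comm]

lemma hamm_eq_zero_iff (s t : Cube d) : hamm s t = 0 ↔ s = t := by
  constructor
  · intro h; funext i
    by_contra hne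
    have hm : i ∈ Finset.univ.filter fun i => s i ≠ t i := by simp [hne]
    have := Finset.card_pos.mpr ⟨i, hm⟩
    rw [hamm] at h; omega
  · rintro rfl; simp [hamm]

lemma hamm_cons (a b : Bool) (x y : Cube d) :
    hamm (Fin.cons a x) (Fin.cons b y) = (if a = b then 0 else 1) + hamm x y := by
  simp [hamm_eq_sum, Fin.sum_univ_succ]

lemma hamm_cons_same (a : Bool) (x y : Cube d) :
    hamm (Fin.cons a x) (Fin.cons a y) = hamm x y := by simp [hamm_cons]

lemma hamm_cons_diff (a b : Bool) (hab : a ≠ b) (x y : Cube d) :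
    (hamm (Fin.cons a x) (Fin.cons b y) = 1) ↔ x = y := by
  rw [hamm_cons, if_neg hab, ← hamm_eq_zero_iff x y]; omega

lemma two_rpow_le (x : ℝ) (h0 : 0 ≤ x) (h1 : x ≤ 1) : (2:ℝ) ^ x ≤ 1 + x := by
  have hc := convexOn_exp.2 (Set.mem_univ (0:ℝ)) (Set.mem_univ (Real.log 2))
    (by linarith : (0:ℝ) ≤ 1 - x) h0 (by ring)
  simp only [smul_eq_mul, mul_zero, zero_add, Real.exp_zero, mul_one,
    Real.exp_log two_pos] at hc
  rw [Real.rpow_def_of_pos two_pos, mul_comm]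
  linarith

lemma logb_one_add_ge (x : ℝ) (h0 : 0 ≤ x) (h1 : x ≤ 1) : x ≤ Real.logb 2 (1 + x) := by
  rw [Real.le_logb_iff_rpow_le one_lt_two (by linarith)]
  exact two_rpow_le x h0 h1

lemma numeric_step_le (d : ℕ) (a b : ℝ) (ha : 0 ≤ a) (hb : 0 ≤ b) (hab : a ≤ b) :
    (a + b) * ((d + 1) - Real.logb 2 (a + b)) ≤
      a * (d - Real.logb 2 a) + b * (d - Real.logb 2 b) + |a - b| := by
    rcases eq_or_lt_of_le ha with h0 | hapos
    · rw [← h0]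
      simp [abs_of_nonneg hb]
      nlinarith [Real.logb_nonneg (b := 2) (x := b)]
    · have hbpos : 0 < b := lt_of_lt_of_le hapos hab
      have habpos : 0 < a + b := by linarith
      have key1 : a ≤ a * Real.logb 2 ((a + b) / a) := by
        have h2 : (2:ℝ) ≤ (a + b) / a := by
          rw [le_div_iff₀ hapos]; linarith
        have := Real.logb_le_logb_of_le one_lt_two two_pos h2
        rw [Real.logb_self_eq_one one_lt_two] at this
        nlinarith
      have key2 : a ≤ b * Real.logb 2 ((a + b) / b) := by
        have heq : (a + b) / b = 1 + a / b := by field_simp; ring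
        have h1 : a / b ≤ 1 := by rw [div_le_one hbpos]; linarith
        have h0' : 0 ≤ a / b := div_nonneg ha hb
        have := logb_one_add_ge (a / b) h0' h1
        rw [heq]
        calc a = b * (a / b) := by field_simp
        _ ≤ b * Real.logb 2 (1 + a / b) := by nlinarith
      rw [Real.logb_div (by linarith) hapos.ne'] at key1
      rw [Real.logb_div (by linarith) hbpos.ne'] at key2
      rw [abs_of_nonpos (by linarith)]
      nlinarith

lemma numeric_step (d : ℕ) (a b : ℝ) (ha : 0 ≤ a) (hb : 0 ≤ b) :
    (a + b) * ((d + 1) - Real.logb 2 (a + b)) ≤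
      a * (d - Real.logb 2 a) + b * (d - Real.logb 2 b) + |a - b| := by
  rcases le_total a b with hab | hab
  · exact numeric_step_le d a b ha hb hab
  · have := numeric_step_le d b a hb ha hab
    rw [add_comm b a] at this
    rw [abs_sub_comm]
    linarith

/-- Directed edge boundary count of a vertex set in the hypercube. -/
def eb {d : ℕ} (A : Finset (Cube d)) : ℕ :=
  ∑ s : Cube d, ∑ t : Cube d, if hamm s t = 1 ∧ s ∈ A ∧ t ∉ A then 1 else 0

def consEquiv (d : ℕ) : Bool × Cube d ≃ Cube (d + 1) where
  toFun p := Fin.cons p.1 p.2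
  invFun s := (s 0, fun i => s i.succ)
  left_inv := by rintro ⟨a, x⟩; simp
  right_inv := fun s => Fin.cons_self_tail s

lemma sum_cube_succ {d : ℕ} {M : Type*} [AddCommMonoid M] (F : Cube (d + 1) → M) :
    ∑ s, F s = (∑ x : Cube d, F (Fin.cons true x)) + ∑ x : Cube d, F (Fin.cons false x) := by
  rw [← Equiv.sum_comp (consEquiv d) F, Fintype.sum_prod_type, Fintype.sum_bool]
  rfl

def sl {d : ℕ} (b : Bool) (A : Finset (Cube (d + 1))) : Finset (Cube d) :=
  univ.filter fun x => Fin.cons b x ∈ A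

lemma mem_sl {d : ℕ} (b : Bool) (A : Finset (Cube (d + 1))) (x : Cube d) :
    x ∈ sl b A ↔ Fin.cons b x ∈ A := by simp [sl]

lemma card_split {d : ℕ} (A : Finset (Cube (d + 1))) :
    A.card = (sl true A).card + (sl false A).card := by
  have h : A.card = ∑ s : Cube (d + 1), if s ∈ A then 1 else 0 := by
    rw [Finset.sum_ite_mem, univ_inter, Finset.card_eq_sum_ones]
  rw [h, sum_cube_succ (fun s => if s ∈ A then 1 else 0), sl, sl,
    Finset.card_filter, Finset.card_filter]

lemma block_same {d : ℕ} (A : Finset (Cube (d + 1))) (a : Bool) :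
    (∑ x : Cube d, ∑ y : Cube d,
      if hamm (Fin.cons a x) (Fin.cons a y) = 1 ∧ Fin.cons a x ∈ A ∧ Fin.cons a y ∉ A
      then 1 else 0) = eb (sl a A) := by
  rw [eb]
  refine Finset.sum_congr rfl fun x _ => Finset.sum_congr rfl fun y _ => ?_
  refine if_congr ?_ rfl rfl
  rw [hamm_cons_same, mem_sl, mem_sl]

lemma block_diff {d : ℕ} (A : Finset (Cube (d + 1))) (a b : Bool) (hab : a ≠ b) :
    (∑ x : Cube d, ∑ y : Cube d,
      if hamm (Fin.cons a x) (Fin.cons b y) = 1 ∧ Fin.cons a x ∈ A ∧ Fin.cons b y ∉ A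
      then 1 else 0) = (sl a A \ sl b A).card := by
  have step1 : ∀ x : Cube d, (∑ y : Cube d,
      if hamm (Fin.cons a x) (Fin.cons b y) = 1 ∧ Fin.cons a x ∈ A ∧ Fin.cons b y ∉ A
      then 1 else 0) = if x ∈ sl a A ∧ x ∉ sl b A then 1 else 0 := by
    intro x
    have h2 : ∀ y : Cube d,
        (if hamm (Fin.cons a x) (Fin.cons b y) = 1 ∧ Fin.cons a x ∈ A ∧ Fin.cons b y ∉ A
         then (1:ℕ) else 0)
        = if x = y then (if Fin.cons a x ∈ A ∧ Fin.cons b y ∉ A then 1 else 0) else 0 := by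
      intro y
      rw [← ite_and]
      exact if_congr (and_congr_left' (hamm_cons_diff a b hab x y)) rfl rfl
    simp only [h2]
    rw [Finset.sum_ite_eq univ x (fun y => if Fin.cons a x ∈ A ∧ Fin.cons b y ∉ A then 1 else 0),
      if_pos (mem_univ x)]
    exact if_congr (by rw [mem_sl, mem_sl]) rfl rfl
  simp only [step1]
  rw [← Finset.card_filter]
  congr 1
  ext x
  simp [Finset.mem_sdiff]

lemma eb_split {d : ℕ} (A : Finset (Cube (d + 1))) :
    eb A = eb (sl true A) + eb (sl false A)
      + ((sl true A \ sl false A).card + (sl false A \ sl true A).card) := by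
  rw [eb, sum_cube_succ (fun s => ∑ t, if hamm s t = 1 ∧ s ∈ A ∧ t ∉ A then 1 else 0)]
  have expand : ∀ aa : Bool,
      (∑ x : Cube d, ∑ t : Cube (d + 1),
        if hamm (Fin.cons aa x) t = 1 ∧ Fin.cons aa x ∈ A ∧ t ∉ A then 1 else 0)
      = (∑ x : Cube d, ∑ y : Cube d,
          if hamm (Fin.cons aa x) (Fin.cons true y) = 1 ∧ Fin.cons aa x ∈ A ∧ Fin.cons true y ∉ A
          then 1 else 0)
        + ∑ x : Cube d, ∑ y : Cube d,
          if hamm (Fin.cons aa x) (Fin.cons false y) = 1 ∧ Fin.cons aa x ∈ A ∧ Fin.cons false y ∉ A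
          then 1 else 0 := by
    intro aa
    rw [← Finset.sum_add_distrib]
    exact Finset.sum_congr rfl fun x _ => sum_cube_succ _
  rw [expand true, expand false,
    block_same A true, block_same A false,
    block_diff A true false (by simp), block_diff A false true (by simp)]
  omega

/-- Edge-isoperimetric inequality in the hypercube. -/
theorem iso : ∀ {d : ℕ} (A : Finset (Cube d)),
    (A.card : ℝ) * (d - Real.logb 2 A.card) ≤ eb A := by
  intro d
  induction d with
  | zero =>
    intro A
    have h1 : A.card ≤ 1 := by
      have := Finset.card_le_univ A
      simpa using this
    rcases Nat.le_one_iff_eq_zero_or_eq_one.mp h1 with h | h <;> rw [h] <;> simp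
  | succ d ih =>
    intro A
    rw [eb_split A, card_split A]
    have h1 := ih (sl true A)
    have h0 := ih (sl false A)
    have hc10 := Finset.card_sdiff_add_card_inter (sl true A) (sl false A)
    have hc01 := Finset.card_sdiff_add_card_inter (sl false A) (sl true A)
    have hle10 : (sl true A ∩ sl false A).card ≤ (sl false A).card :=
      Finset.card_le_card Finset.inter_subset_right
    have hle01 : (sl false A ∩ sl true A).card ≤ (sl true A).card :=
      Finset.card_le_card Finset.inter_subset_right
    have habs : |((sl true A).card : ℝ) - (sl false A).card| ≤
        ((sl true A \ sl false A).card : ℝ) + (sl false A \ sl true A).card := by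
      rw [abs_sub_le_iff]
      constructor
      · have hh : ((sl true A \ sl false A).card : ℝ) + (sl true A ∩ sl false A).card
            = (sl true A).card := by exact_mod_cast hc10
        have := (Nat.cast_le (α := ℝ)).mpr hle10
        have h2 : (0:ℝ) ≤ ((sl false A \ sl true A).card : ℝ) := by positivity
        linarith
      · have : ((sl false A).card : ℝ) - (sl true A).card ≤ (sl false A \ sl true A).card := by
          have := (Nat.cast_le (α := ℝ)).mpr hle01
          have hh : ((sl false A \ sl true A).card : ℝ) + (sl false A ∩ sl true A).card
              = (sl false A).card := by exact_mod_cast hc01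
          linarith
        have h2 : (0:ℝ) ≤ ((sl true A \ sl false A).card : ℝ) := by positivity
        linarith
    have hnum := numeric_step d ((sl true A).card : ℝ) ((sl false A).card : ℝ)
      (by positivity) (by positivity)
    push_cast
    push_cast at h1 h0 hnum
    linarith

lemma ball_card_le (z : Cube d) (m : ℕ) (hm : m ≤ d) :
    (univ.filter fun t : Cube d => hamm z t ≤ m).card * 7 ^ (d - m) ≤ 8 ^ d := by
  have step1 : (univ.filter fun t : Cube d => hamm z t ≤ m).card ≤
      ∑ j ∈ range (m + 1), d.choose j := by
    have h := Finset.card_le_card_of_injOn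
      (s := univ.filter fun t : Cube d => hamm z t ≤ m)
      (f := fun t : Cube d => univ.filter fun i => z i ≠ t i)
      (t := (range (m + 1)).biUnion fun j => Finset.powersetCard j (univ : Finset (Fin d)))
      ?_ ?_
    · refine h.trans ?_
      refine (Finset.card_biUnion_le).trans ?_
      refine Finset.sum_le_sum fun j _ => ?_
      rw [Finset.card_powersetCard]
      simp
    · intro t ht
      simp only [Finset.mem_coe, Finset.mem_filter, Finset.mem_univ, true_and] at ht ⊢
      rw [Finset.mem_biUnion]
      refine ⟨(univ.filter fun i => z i ≠ t i).card, ?_, ?_⟩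
      · rw [Finset.mem_range]; have : hamm z t ≤ m := ht; rw [hamm] at this; omega
      · rw [Finset.mem_powersetCard]; exact ⟨Finset.subset_univ _, rfl⟩
    · intro t ht t' ht' hEq
      funext i
      have h := Finset.ext_iff.mp hEq i
      simp only [Finset.mem_filter, Finset.mem_univ, true_and] at h
      cases hz : z i <;> cases hti : t i <;> cases hti' : t' i <;> simp_all
  have step2 : (∑ j ∈ range (m + 1), d.choose j) * 7 ^ (d - m) ≤ 8 ^ d := by
    rw [Finset.sum_mul]
    have h1 : ∑ j ∈ range (m + 1), d.choose j * 7 ^ (d - m) ≤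
        ∑ j ∈ range (m + 1), 7 ^ (d - j) * d.choose j := by
      refine Finset.sum_le_sum fun j hj => ?_
      rw [Finset.mem_range] at hj
      have : 7 ^ (d - m) ≤ 7 ^ (d - j) := Nat.pow_le_pow_right (by norm_num) (by omega)
      calc d.choose j * 7 ^ (d - m) ≤ d.choose j * 7 ^ (d - j) :=
            Nat.mul_le_mul_left _ this
        _ = 7 ^ (d - j) * d.choose j := by ring
    refine h1.trans ?_
    have h2 : ∑ j ∈ range (m + 1), 7 ^ (d - j) * d.choose j ≤
        ∑ j ∈ range (d + 1), 7 ^ (d - j) * d.choose j := by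
      refine Finset.sum_le_sum_of_subset ?_
      exact Finset.range_subset_range.mpr (by omega)
    refine h2.trans ?_
    have h3 : ∑ j ∈ range (d + 1), 7 ^ (d - j) * d.choose j = 8 ^ d := by
      simpa using (add_pow (1:ℕ) 7 d).symm
    exact le_of_eq h3
  calc (univ.filter fun t : Cube d => hamm z t ≤ m).card * 7 ^ (d - m)
      ≤ (∑ j ∈ range (m + 1), d.choose j) * 7 ^ (d - m) := Nat.mul_le_mul_right _ step1
    _ ≤ 8 ^ d := step2

lemma two_rpow_14_5_le : (2:ℝ) ^ ((14:ℝ)/5) ≤ 7 := by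
  have h5 : ((2:ℝ) ^ ((14:ℝ)/5)) ^ (5:ℕ) = 2 ^ (14:ℕ) := by
    rw [← Real.rpow_natCast ((2:ℝ) ^ ((14:ℝ)/5)) 5, ← Real.rpow_mul (by norm_num)]
    norm_num
  refine le_of_pow_le_pow_left₀ (n := 5) (by norm_num) (by norm_num) ?_
  rw [h5]; norm_num

lemma logb_seven : (14:ℝ)/5 ≤ Real.logb 2 7 := by
  rw [Real.le_logb_iff_rpow_le one_lt_two (by norm_num)]
  exact two_rpow_14_5_le

/-- Isoperimetric lower bound for a class contained in a small Hamming ball. -/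
lemma class_bound (z : Cube d) (C : Finset (Cube d))
    (hsub : ∀ s ∈ C, hamm z s ≤ d / 8) :
    (C.card : ℝ) * ((9:ℝ)/20 * d) ≤ eb C := by
  rcases Nat.eq_zero_or_pos C.card with h0 | hpos
  · rw [h0]; simp
  · have hm : d / 8 ≤ d := Nat.div_le_self d 8
    have hCsub : C ⊆ univ.filter fun t : Cube d => hamm z t ≤ d / 8 := by
      intro s hs; simp [hsub s hs]
    have hCle : C.card ≤ (univ.filter fun t : Cube d => hamm z t ≤ d / 8).card :=
      Finset.card_le_card hCsub
    have hball := ball_card_le z (d / 8) hm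
    have h7pos : (0:ℝ) < 7 ^ (d - d / 8) := by positivity
    have hBle : ((univ.filter fun t : Cube d => hamm z t ≤ d / 8).card : ℝ)
        ≤ 8 ^ d / 7 ^ (d - d / 8) := by
      rw [le_div_iff₀ h7pos]
      exact_mod_cast hball
    have hCpos : (1:ℝ) ≤ C.card := by exact_mod_cast hpos
    have hCleR : (C.card : ℝ) ≤ 8 ^ d / 7 ^ (d - d / 8) :=
      le_trans (by exact_mod_cast hCle) hBle
    have hL : Real.logb 2 (C.card : ℝ) ≤ 3 * d - ((d:ℝ) - (d:ℝ)/8) * ((14:ℝ)/5) := by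
      have l1 : Real.logb 2 (C.card : ℝ) ≤ Real.logb 2 ((8:ℝ) ^ d / 7 ^ (d - d / 8)) :=
        Real.logb_le_logb_of_le one_lt_two (by linarith) hCleR
      have l2 : Real.logb 2 ((8:ℝ) ^ d / 7 ^ (d - d / 8))
          = d * Real.logb 2 8 - ((d - d / 8 : ℕ) : ℝ) * Real.logb 2 7 := by
        rw [Real.logb_div (by positivity) (by positivity), Real.logb_pow, Real.logb_pow]
      have l3 : Real.logb 2 (8:ℝ) = 3 := by
        rw [show (8:ℝ) = 2 ^ (3:ℕ) by norm_num, Real.logb_pow,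
          Real.logb_self_eq_one one_lt_two]
        norm_num
      have l4 : ((d:ℝ) - (d:ℝ)/8) ≤ ((d - d / 8 : ℕ) : ℝ) := by
        have hcd : ((d / 8 : ℕ) : ℝ) ≤ (d:ℝ) / 8 := by
          have := Nat.cast_div_le (m := d) (n := 8) (α := ℝ)
          simpa using this
        have : ((d - d / 8 : ℕ) : ℝ) = (d:ℝ) - ((d / 8 : ℕ) : ℝ) := by
          rw [Nat.cast_sub hm]
        linarith
      have l5 : ((d - d / 8 : ℕ) : ℝ) * ((14:ℝ)/5) ≤ ((d - d / 8 : ℕ) : ℝ) * Real.logb 2 7 := by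
        have : (0:ℝ) ≤ ((d - d / 8 : ℕ) : ℝ) := by positivity
        nlinarith [logb_seven]
      calc Real.logb 2 (C.card : ℝ)
          ≤ d * Real.logb 2 8 - ((d - d / 8 : ℕ) : ℝ) * Real.logb 2 7 := by rw [← l2]; exact l1
        _ ≤ d * 3 - ((d:ℝ) - (d:ℝ)/8) * ((14:ℝ)/5) := by
            rw [l3]
            have := l4
            nlinarith [l5]
        _ = 3 * d - ((d:ℝ) - (d:ℝ)/8) * ((14:ℝ)/5) := by ring
    have hfinal : (9:ℝ)/20 * d ≤ (d:ℝ) - Real.logb 2 (C.card : ℝ) := by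
      have : ((d:ℝ) - (d:ℝ)/8) * ((14:ℝ)/5) = (49:ℝ)/20 * d := by ring
      linarith [hL]
    calc (C.card : ℝ) * ((9:ℝ)/20 * d)
        ≤ (C.card : ℝ) * ((d:ℝ) - Real.logb 2 (C.card : ℝ)) := by
          have : (0:ℝ) ≤ (C.card : ℝ) := by positivity
          nlinarith
      _ ≤ eb C := iso C

lemma Dmet_nonneg (a b : Cube d) : 0 ≤ Dmet d a b := by
  rw [Dmet]; split
  · exact le_refl 0
  · positivity

lemma Dmet_comm (a b : Cube d) : Dmet d a b = Dmet d b a := by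
  rw [Dmet, Dmet, hamm_comm a b]
  exact if_congr eq_comm rfl rfl

lemma deg_le (t : Cube d) : (univ.filter fun s : Cube d => hamm s t = 1).card ≤ d := by
  have hsub : (univ.filter fun s : Cube d => hamm s t = 1) ⊆
      Finset.image (fun i : Fin d => Function.update t i (!t i)) univ := by
    intro s hs
    simp only [mem_filter, mem_univ, true_and] at hs
    rw [hamm] at hs
    obtain ⟨i, hi⟩ := Finset.card_eq_one.mp hs
    refine Finset.mem_image.mpr ⟨i, mem_univ i, ?_⟩
    funext j
    by_cases hj : j = i
    · subst hj
      have hmem : j ∈ univ.filter fun k => s k ≠ t k := by rw [hi]; exact mem_singleton_self j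
      simp only [mem_filter, mem_univ, true_and] at hmem
      rw [Function.update_self]
      cases hsj : s j <;> cases htj : t j <;> simp_all
    · have hnmem : j ∉ univ.filter fun k => s k ≠ t k := by
        rw [hi]; simp [hj]
      simp only [mem_filter, mem_univ, true_and, not_not] at hnmem
      rw [Function.update_of_ne hj, hnmem]
  calc (univ.filter fun s : Cube d => hamm s t = 1).card
      ≤ (Finset.image (fun i : Fin d => Function.update t i (!t i)) univ).card :=
        Finset.card_le_card hsub
    _ ≤ (univ : Finset (Fin d)).card := Finset.card_image_le
    _ = d := by simp

end ZeroExtAux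


open ZeroExtAux

set_option maxHeartbeats 1600000

/-- There are a universal constant `c > 0` and `d₀` such that for every
`d ≥ d₀` and every `0`-extension `f` of `G_d`, the `0`-extension cost
`Σ_{(u,v) ∈ E} c(u,v) · D(f(u), f(v))` is at least `c · k · d^{3/2}` where `k = 2^d`.
(The sum over ordered pairs is halved so each edge is counted once.) -/
theorem zero_extension_cost_lower_bound :
    ∃ c : ℝ, 0 < c ∧ ∃ d0 : ℕ, ∀ d : ℕ, d0 ≤ d →
      ∀ f : Vtx d → Cube d, (∀ s : Cube d, f (Sum.inr s) = s) →
        c * (2 : ℝ) ^ d * (d : ℝ) ^ ((3 : ℝ) / 2) ≤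
          (1 / 2) * ∑ u : Vtx d, ∑ v : Vtx d, gCap d u v * Dmet d (f u) (f v) := by
  classical
  refine ⟨1/64, by norm_num, 1, ?_⟩
  intro d hd f hf
  set g : Cube d → Cube d := fun s => f (Sum.inl s) with hgdef
  have hdpos : (0:ℝ) < d := by
    have : (0:ℕ) < d := Nat.lt_of_lt_of_le Nat.zero_lt_one hd
    exact_mod_cast this
  have hsq : (0:ℝ) ≤ Real.sqrt d := Real.sqrt_nonneg d
  have hP2pos : (0:ℝ) < 2 ^ d := by positivity
  -- Step A : rewrite the cost as cube-edge block + pendant block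
  have h1 : ∀ s : Cube d, (∑ v : Vtx d, gCap d (Sum.inl s) v * Dmet d (f (Sum.inl s)) (f v))
      = (∑ t : Cube d, (if hamm s t = 1 then (1:ℝ) else 0) * Dmet d (g s) (g t))
        + Real.sqrt d * Dmet d (g s) s := by
    intro s
    rw [Fintype.sum_sum_type]
    congr 1
    have ha : ∀ t : Cube d,
        gCap d (Sum.inl s) (Sum.inr t) * Dmet d (f (Sum.inl s)) (f (Sum.inr t))
        = if s = t then Real.sqrt d * Dmet d (g s) t else 0 := by
      intro t
      rw [hf t]
      show (if s = t then Real.sqrt d else 0) * Dmet d (g s) t = _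
      rw [ite_mul, zero_mul]
    rw [Finset.sum_congr rfl fun t _ => ha t,
      Finset.sum_ite_eq univ s (fun t => Real.sqrt d * Dmet d (g s) t), if_pos (mem_univ s)]
  have h2 : ∀ s : Cube d, (∑ v : Vtx d, gCap d (Sum.inr s) v * Dmet d (f (Sum.inr s)) (f v))
      = Real.sqrt d * Dmet d (g s) s := by
    intro s
    rw [Fintype.sum_sum_type]
    have ha : ∀ t : Cube d,
        gCap d (Sum.inr s) (Sum.inl t) * Dmet d (f (Sum.inr s)) (f (Sum.inl t))
        = if s = t then Real.sqrt d * Dmet d s (g t) else 0 := by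
      intro t
      rw [hf s]
      show (if s = t then Real.sqrt d else 0) * Dmet d s (g t) = _
      rw [ite_mul, zero_mul]
    have hb : ∀ t : Cube d,
        gCap d (Sum.inr s) (Sum.inr t) * Dmet d (f (Sum.inr s)) (f (Sum.inr t)) = 0 := by
      intro t
      show (0:ℝ) * _ = 0
      rw [zero_mul]
    rw [Finset.sum_congr rfl fun t _ => ha t, Finset.sum_congr rfl fun t _ => hb t,
      Finset.sum_ite_eq univ s (fun t => Real.sqrt d * Dmet d s (g t)), if_pos (mem_univ s),
      Finset.sum_const_zero, add_zero, Dmet_comm]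
  have hT : (∑ u : Vtx d, ∑ v : Vtx d, gCap d u v * Dmet d (f u) (f v))
      = (∑ s : Cube d, ∑ t : Cube d, (if hamm s t = 1 then (1:ℝ) else 0) * Dmet d (g s) (g t))
        + 2 * ∑ s : Cube d, Real.sqrt d * Dmet d (g s) s := by
    rw [Fintype.sum_sum_type, Finset.sum_congr rfl fun s _ => h1 s,
      Finset.sum_congr rfl fun s _ => h2 s, Finset.sum_add_distrib]
    ring
  -- Notation
  set Bad : Finset (Cube d) := univ.filter fun s : Cube d => ¬ hamm s (g s) ≤ d / 8 with hBaddef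
  set Cz : Cube d → Finset (Cube d) :=
    fun z => univ.filter fun s : Cube d => hamm s (g s) ≤ d / 8 ∧ g s = z with hCzdef
  set EcutR : ℝ :=
    ∑ s : Cube d, ∑ t : Cube d, if hamm s t = 1 ∧ g s ≠ g t then (1:ℝ) else 0 with hEdef
  have hEnonneg : 0 ≤ EcutR := by
    rw [hEdef]
    refine Finset.sum_nonneg fun s _ => Finset.sum_nonneg fun t _ => ?_
    split <;> norm_num
  -- (1) pendant bound
  have pend : Real.sqrt d * ((d / 8 + 1 : ℕ) : ℝ) * (Bad.card : ℝ)
      ≤ ∑ s : Cube d, Real.sqrt d * Dmet d (g s) s := by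
    have hp : ∀ s : Cube d,
        (if s ∈ Bad then Real.sqrt d * ((d / 8 + 1 : ℕ) : ℝ) else 0)
          ≤ Real.sqrt d * Dmet d (g s) s := by
      intro s
      by_cases hs : s ∈ Bad
      · rw [if_pos hs]
        have hb : d / 8 + 1 ≤ hamm s (g s) := by
          rw [hBaddef, mem_filter] at hs
          omega
        have hgs : g s ≠ s := by
          intro h
          rw [h, (hamm_eq_zero_iff s s).mpr rfl] at hb
          omega
        have hD : Dmet d (g s) s = hamm (g s) s + 2 * Real.sqrt d := by
          rw [Dmet, if_neg hgs]
        have hham : ((d / 8 + 1 : ℕ) : ℝ) ≤ (hamm (g s) s : ℝ) := by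
          rw [hamm_comm (g s) s]
          exact_mod_cast hb
        refine mul_le_mul_of_nonneg_left ?_ hsq
        rw [hD]
        linarith
      · rw [if_neg hs]
        exact mul_nonneg hsq (Dmet_nonneg _ _)
    calc Real.sqrt d * ((d / 8 + 1 : ℕ) : ℝ) * (Bad.card : ℝ)
        = ∑ s : Cube d, (if s ∈ Bad then Real.sqrt d * ((d / 8 + 1 : ℕ) : ℝ) else 0) := by
          rw [Finset.sum_ite_mem, univ_inter, Finset.sum_const, nsmul_eq_mul]
          ring
      _ ≤ _ := Finset.sum_le_sum fun s _ => hp s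
  -- (2) cut bound
  have cutb : 2 * Real.sqrt d * EcutR
      ≤ ∑ s : Cube d, ∑ t : Cube d, (if hamm s t = 1 then (1:ℝ) else 0) * Dmet d (g s) (g t) := by
    have hp : ∀ s t : Cube d,
        2 * Real.sqrt d * (if hamm s t = 1 ∧ g s ≠ g t then (1:ℝ) else 0)
          ≤ (if hamm s t = 1 then (1:ℝ) else 0) * Dmet d (g s) (g t) := by
      intro s t
      by_cases h1 : hamm s t = 1
      · by_cases h2 : g s = g t
        · have : ¬ (hamm s t = 1 ∧ g s ≠ g t) := by tauto
          rw [if_neg this, if_pos h1, mul_zero, one_mul, h2]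
          exact Dmet_nonneg _ _
        · rw [if_pos ⟨h1, h2⟩, if_pos h1, mul_one, one_mul, Dmet, if_neg h2]
          have : (0:ℝ) ≤ (hamm (g s) (g t) : ℝ) := by positivity
          linarith
      · have : ¬ (hamm s t = 1 ∧ g s ≠ g t) := by tauto
        rw [if_neg this, if_neg h1, mul_zero, zero_mul]
    calc 2 * Real.sqrt d * EcutR
        = ∑ s : Cube d, ∑ t : Cube d,
            2 * Real.sqrt d * (if hamm s t = 1 ∧ g s ≠ g t then (1:ℝ) else 0) := by
          rw [hEdef, Finset.mul_sum]
          exact Finset.sum_congr rfl fun s _ => by rw [Finset.mul_sum]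
      _ ≤ _ := Finset.sum_le_sum fun s _ => Finset.sum_le_sum fun t _ => hp s t
  -- (3) class cardinalities
  have hGoodcard : ∑ z : Cube d, (Cz z).card
      = (univ.filter fun s : Cube d => hamm s (g s) ≤ d / 8).card := by
    have hz : ∀ s : Cube d, (∑ z : Cube d,
        if hamm s (g s) ≤ d / 8 ∧ g s = z then (1:ℕ) else 0)
        = if hamm s (g s) ≤ d / 8 then 1 else 0 := by
      intro s
      have hrw : ∀ z : Cube d, (if hamm s (g s) ≤ d / 8 ∧ g s = z then (1:ℕ) else 0)
          = if g s = z then (if hamm s (g s) ≤ d / 8 then 1 else 0) else 0 := by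
        intro z
        rw [← ite_and]
        exact if_congr and_comm rfl rfl
      rw [Finset.sum_congr rfl fun z _ => hrw z,
        Finset.sum_ite_eq univ (g s) (fun _ => if hamm s (g s) ≤ d / 8 then (1:ℕ) else 0),
        if_pos (mem_univ _)]
    calc ∑ z : Cube d, (Cz z).card
        = ∑ z : Cube d, ∑ s : Cube d, (if hamm s (g s) ≤ d / 8 ∧ g s = z then 1 else 0) := by
          refine Finset.sum_congr rfl fun z _ => ?_
          rw [hCzdef, Finset.card_filter]
      _ = ∑ s : Cube d, ∑ z : Cube d, (if hamm s (g s) ≤ d / 8 ∧ g s = z then 1 else 0) :=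
          Finset.sum_comm
      _ = ∑ s : Cube d, (if hamm s (g s) ≤ d / 8 then 1 else 0) :=
          Finset.sum_congr rfl fun s _ => hz s
      _ = _ := (Finset.card_filter _ _).symm
  have hTotal : (univ.filter fun s : Cube d => hamm s (g s) ≤ d / 8).card + Bad.card
      = 2 ^ d := by
    rw [hBaddef, Finset.card_filter_add_card_filter_not, card_univ]
    simp [Fintype.card_fun]
  -- (4) accounting : total class boundary is at most cut + d * |Bad|
  have hacct : (∑ z : Cube d, (eb (Cz z) : ℝ)) ≤ EcutR + d * (Bad.card : ℝ) := by
    have hebR : ∀ z : Cube d, (eb (Cz z) : ℝ)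
        = ∑ s : Cube d, ∑ t : Cube d,
            (if hamm s t = 1 ∧ s ∈ Cz z ∧ t ∉ Cz z then (1:ℝ) else 0) := by
      intro z
      rw [eb]
      push_cast
      rfl
    have key : ∀ s t : Cube d,
        (∑ z : Cube d, if hamm s t = 1 ∧ s ∈ Cz z ∧ t ∉ Cz z then (1:ℝ) else 0)
        ≤ (if hamm s t = 1 ∧ g s ≠ g t then (1:ℝ) else 0)
          + (if hamm s t = 1 ∧ t ∈ Bad then (1:ℝ) else 0) := by
      intro s t
      have hz : ∀ z : Cube d, (if hamm s t = 1 ∧ s ∈ Cz z ∧ t ∉ Cz z then (1:ℝ) else 0)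
          = if g s = z then
              (if hamm s t = 1 ∧ s ∈ Cz (g s) ∧ t ∉ Cz (g s) then (1:ℝ) else 0) else 0 := by
        intro z
        by_cases hgz : g s = z
        · rw [if_pos hgz, hgz]
        · rw [if_neg hgz, if_neg]
          rintro ⟨-, hs, -⟩
          rw [hCzdef, mem_filter] at hs
          exact hgz hs.2.2
      rw [Finset.sum_congr rfl fun z _ => hz z,
        Finset.sum_ite_eq univ (g s)
          (fun _ => if hamm s t = 1 ∧ s ∈ Cz (g s) ∧ t ∉ Cz (g s) then (1:ℝ) else 0),
        if_pos (mem_univ _)]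
      by_cases h1 : hamm s t = 1
      · by_cases hsC : s ∈ Cz (g s)
        · by_cases htC : t ∈ Cz (g s)
          · rw [if_neg (by tauto)]
            have h2 : (0:ℝ) ≤ (if hamm s t = 1 ∧ g s ≠ g t then (1:ℝ) else 0) := by
              split <;> norm_num
            have h3 : (0:ℝ) ≤ (if hamm s t = 1 ∧ t ∈ Bad then (1:ℝ) else 0) := by
              split <;> norm_num
            linarith
          · rw [if_pos ⟨h1, hsC, htC⟩]
            by_cases hgood : hamm t (g t) ≤ d / 8
            · have hne : g s ≠ g t := by
                intro hEq
                exact htC (by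
                  rw [hCzdef, mem_filter]
                  exact ⟨mem_univ t, hgood, hEq.symm⟩)
              have hrwC : (if hamm s t = 1 ∧ g s ≠ g t then (1:ℝ) else 0) = 1 :=
                if_pos ⟨h1, hne⟩
              rw [hrwC]
              have h3 : (0:ℝ) ≤ (if hamm s t = 1 ∧ t ∈ Bad then (1:ℝ) else 0) := by
                split <;> norm_num
              linarith
            · have htB : t ∈ Bad := by rw [hBaddef, mem_filter]; exact ⟨mem_univ t, hgood⟩
              have hrwB : (if hamm s t = 1 ∧ t ∈ Bad then (1:ℝ) else 0) = 1 :=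
                if_pos ⟨h1, htB⟩
              rw [hrwB]
              have h2 : (0:ℝ) ≤ (if hamm s t = 1 ∧ g s ≠ g t then (1:ℝ) else 0) := by
                split <;> norm_num
              linarith
        · rw [if_neg (by tauto)]
          have h2 : (0:ℝ) ≤ (if hamm s t = 1 ∧ g s ≠ g t then (1:ℝ) else 0) := by
            split <;> norm_num
          have h3 : (0:ℝ) ≤ (if hamm s t = 1 ∧ t ∈ Bad then (1:ℝ) else 0) := by
            split <;> norm_num
          linarith
      · rw [if_neg (by tauto), if_neg (by tauto), if_neg (by tauto)]
        norm_num
    have hbadterm : (∑ s : Cube d, ∑ t : Cube d,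
        if hamm s t = 1 ∧ t ∈ Bad then (1:ℝ) else 0) ≤ d * (Bad.card : ℝ) := by
      rw [Finset.sum_comm]
      have hper : ∀ t : Cube d,
          (∑ s : Cube d, if hamm s t = 1 ∧ t ∈ Bad then (1:ℝ) else 0)
          ≤ if t ∈ Bad then (d:ℝ) else 0 := by
        intro t
        by_cases ht : t ∈ Bad
        · rw [if_pos ht]
          have : (∑ s : Cube d, if hamm s t = 1 ∧ t ∈ Bad then (1:ℝ) else 0)
              = ((univ.filter fun s : Cube d => hamm s t = 1).card : ℝ) := by
            rw [Finset.card_filter]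
            push_cast
            exact Finset.sum_congr rfl fun s _ => by
              rw [if_congr (and_iff_left ht) rfl rfl]
          rw [this]
          exact_mod_cast deg_le t
        · rw [if_neg ht]
          refine le_of_eq (Finset.sum_eq_zero fun s _ => ?_)
          rw [if_neg (by tauto)]
      calc (∑ t : Cube d, ∑ s : Cube d, if hamm s t = 1 ∧ t ∈ Bad then (1:ℝ) else 0)
          ≤ ∑ t : Cube d, (if t ∈ Bad then (d:ℝ) else 0) := Finset.sum_le_sum fun t _ => hper t
        _ = d * (Bad.card : ℝ) := by
            rw [Finset.sum_ite_mem, univ_inter, Finset.sum_const, nsmul_eq_mul]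
            ring
    calc (∑ z : Cube d, (eb (Cz z) : ℝ))
        = ∑ z : Cube d, ∑ s : Cube d, ∑ t : Cube d,
            (if hamm s t = 1 ∧ s ∈ Cz z ∧ t ∉ Cz z then (1:ℝ) else 0) :=
          Finset.sum_congr rfl fun z _ => hebR z
      _ = ∑ s : Cube d, ∑ t : Cube d, ∑ z : Cube d,
            (if hamm s t = 1 ∧ s ∈ Cz z ∧ t ∉ Cz z then (1:ℝ) else 0) := by
          rw [Finset.sum_comm]
          exact Finset.sum_congr rfl fun s _ => Finset.sum_comm
      _ ≤ ∑ s : Cube d, ∑ t : Cube d,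
            ((if hamm s t = 1 ∧ g s ≠ g t then (1:ℝ) else 0)
              + (if hamm s t = 1 ∧ t ∈ Bad then (1:ℝ) else 0)) :=
          Finset.sum_le_sum fun s _ => Finset.sum_le_sum fun t _ => key s t
      _ = EcutR + (∑ s : Cube d, ∑ t : Cube d,
            if hamm s t = 1 ∧ t ∈ Bad then (1:ℝ) else 0) := by
          rw [hEdef, ← Finset.sum_add_distrib]
          exact Finset.sum_congr rfl fun s _ => Finset.sum_add_distrib
      _ ≤ EcutR + d * (Bad.card : ℝ) := by linarith [hbadterm]
  -- (5) per-class isoperimetric bound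
  have hclass : ∀ z : Cube d, ((Cz z).card : ℝ) * ((9:ℝ)/20 * d) ≤ (eb (Cz z) : ℝ) := by
    intro z
    refine class_bound z (Cz z) fun s hs => ?_
    rw [hCzdef, mem_filter] at hs
    rw [hamm_comm z s, ← hs.2.2]
    exact hs.2.1
  -- (6) combine
  have hEbound : ((2:ℝ) ^ d - (Bad.card : ℝ)) * ((9:ℝ)/20 * d)
      ≤ EcutR + d * (Bad.card : ℝ) := by
    have hsumc : (∑ z : Cube d, ((Cz z).card : ℝ)) * ((9:ℝ)/20 * d)
        ≤ ∑ z : Cube d, (eb (Cz z) : ℝ) := by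
      rw [Finset.sum_mul]
      exact Finset.sum_le_sum fun z _ => hclass z
    have hNG : (∑ z : Cube d, ((Cz z).card : ℝ)) = (2:ℝ) ^ d - (Bad.card : ℝ) := by
      have : (∑ z : Cube d, ((Cz z).card : ℝ))
          = ((univ.filter fun s : Cube d => hamm s (g s) ≤ d / 8).card : ℝ) := by
        exact_mod_cast congrArg (fun n : ℕ => (n:ℝ)) hGoodcard
      rw [this]
      have := hTotal
      have hcast : ((univ.filter fun s : Cube d => hamm s (g s) ≤ d / 8).card : ℝ)
          + (Bad.card : ℝ) = (2:ℝ) ^ d := by exact_mod_cast congrArg (fun n : ℕ => (n:ℝ)) this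
      linarith
    rw [hNG] at hsumc
    linarith [hacct]
  -- final arithmetic
  have hrpow : (d:ℝ) ^ ((3:ℝ)/2) = d * Real.sqrt d := by
    rw [show (3:ℝ)/2 = 1 + 1/2 by norm_num, Real.rpow_add hdpos, Real.rpow_one,
      ← Real.sqrt_eq_rpow]
  rw [hT, hrpow]
  have hm8 : (d:ℝ) / 8 ≤ ((d / 8 + 1 : ℕ) : ℝ) := by
    have : d < 8 * (d / 8 + 1) := by omega
    have hc : (d:ℝ) < 8 * ((d / 8 + 1 : ℕ) : ℝ) := by exact_mod_cast this
    linarith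
  have hBadnn : (0:ℝ) ≤ (Bad.card : ℝ) := by positivity
  have hmain : Real.sqrt d * EcutR + Real.sqrt d * ((d / 8 + 1 : ℕ) : ℝ) * (Bad.card : ℝ)
      ≤ (1/2) * ((∑ s : Cube d, ∑ t : Cube d,
          (if hamm s t = 1 then (1:ℝ) else 0) * Dmet d (g s) (g t))
        + 2 * ∑ s : Cube d, Real.sqrt d * Dmet d (g s) s) := by
    linarith [cutb, pend]
  refine le_trans ?_ hmain
  by_cases hcase : (2:ℝ) ^ d / 8 ≤ (Bad.card : ℝ)
  · -- many bad vertices : pendant term suffices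
    have h1' : Real.sqrt d * ((d:ℝ) / 8) * ((2:ℝ) ^ d / 8)
        ≤ Real.sqrt d * ((d / 8 + 1 : ℕ) : ℝ) * (Bad.card : ℝ) := by
      have e1 : (0:ℝ) ≤ (d:ℝ) / 8 := by positivity
      have e2 : (0:ℝ) ≤ (2:ℝ) ^ d / 8 := by positivity
      have hmm := mul_le_mul hm8 hcase e2 (le_trans e1 hm8)
      nlinarith [hsq, hmm]
    have hEc : (0:ℝ) ≤ Real.sqrt d * EcutR := mul_nonneg hsq hEnonneg
    linarith [h1', hEc]
  · -- few bad vertices : cut term suffices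
    rw [not_le] at hcase
    have hElb : (43:ℝ)/160 * d * (2:ℝ) ^ d ≤ EcutR := by
      have hprod : (d:ℝ) * (Bad.card : ℝ) ≤ (d:ℝ) * ((2:ℝ) ^ d / 8) :=
        mul_le_mul_of_nonneg_left hcase.le hdpos.le
      nlinarith [hEbound, hprod]
    have hpendnn : (0:ℝ) ≤ Real.sqrt d * ((d / 8 + 1 : ℕ) : ℝ) * (Bad.card : ℝ) := by
      positivity
    have : Real.sqrt d * ((43:ℝ)/160 * d * (2:ℝ) ^ d) ≤ Real.sqrt d * EcutR :=
      mul_le_mul_of_nonneg_left hElb hsq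
    have hmono : (0:ℝ) ≤ Real.sqrt d * ((d:ℝ) * (2:ℝ) ^ d) := by positivity
    linarith [this, hpendnn, hmono]
end

section
/- Let G = (V,E) be a finite graph with capacities c and terminal set K ⊆ V, and let Γ be the group of permutations J of V satisfying c(J(u),J(v)) = c(u,v) for all u,v and J(K) = K. If there exists a cut-sparsifier for (G,K) of quality at most α, then there exists a cut-sparsifier H' for (G,K) of quality at most α that is invariant under Γ, i.e., c_{H'}(J(a), J(b)) = c_{H'}(a,b) for every J ∈ Γ and all a, b ∈ K. -/
open Finset

/- ---------- auxiliary lemmas ---------- -/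

lemma image_compl_perm {V : Type*} [Fintype V] [DecidableEq V] (J : Equiv.Perm V)
    (U : Finset V) : (U.image J)ᶜ = Uᶜ.image J := by
  ext x
  simp only [Finset.mem_compl, Finset.mem_image]
  constructor
  · intro h
    exact ⟨J.symm x, fun hx => h ⟨J.symm x, hx, J.apply_symm_apply x⟩, J.apply_symm_apply x⟩
  · rintro ⟨y, hy, rfl⟩ ⟨z, hz, hzy⟩
    exact hy (J.injective hzy ▸ hz)

lemma cutFun_comp {V : Type*} [Fintype V] [DecidableEq V]
    (f : V → V → ℝ) (J : Equiv.Perm V) (U : Finset V) :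
    cutFun (fun a b => f (J a) (J b)) U = cutFun f (U.image J) := by
  unfold cutFun
  rw [Finset.sum_image (fun x _ y _ h => J.injective h)]
  refine Finset.sum_congr rfl fun u hu => ?_
  rw [image_compl_perm, Finset.sum_image (fun x _ y _ h => J.injective h)]

lemma termCut_inv {V : Type*} [Fintype V] [DecidableEq V]
    (c : V → V → ℝ) (J : Equiv.Perm V) (hJc : ∀ u v, c (J u) (J v) = c u v)
    (K U : Finset V) (hJK : K.image J = K) :
    termCut c K (U.image J) = termCut c K U := by
  have key : ∀ (J : Equiv.Perm V), (∀ u v, c (J u) (J v) = c u v) → K.image J = K →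
      ∀ (W : Finset V) (x : ℝ), (∃ A : Finset V, A ∩ K = W ∧ cutFun c A = x) →
        (∃ A : Finset V, A ∩ K = W.image J ∧ cutFun c A = x) := by
    intro J hJc hJK W x ⟨A, hA, hx⟩
    refine ⟨A.image J, ?_, ?_⟩
    · rw [← hJK, ← Finset.image_inter _ _ J.injective, hA]
    · rw [← cutFun_comp, ← hx]
      unfold cutFun
      exact Finset.sum_congr rfl fun u _ => Finset.sum_congr rfl fun v _ => hJc u v
  have hJc' : ∀ u v, c (J.symm u) (J.symm v) = c u v := by
    intro u v
    conv_rhs => rw [← J.apply_symm_apply u, ← J.apply_symm_apply v, hJc]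
  have hJK' : K.image J.symm = K := by
    conv_lhs => rw [← hJK]
    rw [Finset.image_image, show (⇑J.symm ∘ ⇑J) = id from funext fun y => J.symm_apply_apply y,
      Finset.image_id]
  unfold termCut
  congr 1
  apply Set.eq_of_subset_of_subset
  · rintro x hx
    have h2 := key J.symm hJc' hJK' (U.image J) x hx
    rwa [Finset.image_image, show (⇑J.symm ∘ ⇑J) = id from funext fun y => J.symm_apply_apply y,
      Finset.image_id] at h2
  · rintro x hx
    exact key J hJc hJK U x hx

/-- If `(G,K)` admits a cut-sparsifier of quality at most `α`, then it
admits one that is invariant under every capacity-preserving permutation of `V` that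
maps `K` to `K`. -/
theorem invariant_sparsifier_exists
    {V : Type*} [Fintype V] [DecidableEq V]
    (c : V → V → ℝ) (hsym : ∀ u v, c u v = c v u) (hnn : ∀ u v, 0 ≤ c u v)
    (K : Finset V) (α : ℝ)
    (hex : ∃ cH : V → V → ℝ,
      (∀ a b, cH a b = cH b a) ∧ (∀ a b, 0 ≤ cH a b) ∧
      (∀ a b, cH a b ≠ 0 → a ∈ K ∧ b ∈ K) ∧
      (∀ U ⊆ K, termCut c K U ≤ cutFun cH U ∧ cutFun cH U ≤ α * termCut c K U)) :
    ∃ cH' : V → V → ℝ,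
      (∀ a b, cH' a b = cH' b a) ∧ (∀ a b, 0 ≤ cH' a b) ∧
      (∀ a b, cH' a b ≠ 0 → a ∈ K ∧ b ∈ K) ∧
      (∀ U ⊆ K, termCut c K U ≤ cutFun cH' U ∧ cutFun cH' U ≤ α * termCut c K U) ∧
      (∀ J : Equiv.Perm V, (∀ u v, c (J u) (J v) = c u v) → K.image J = K →
        ∀ a ∈ K, ∀ b ∈ K, cH' (J a) (J b) = cH' a b) := by
  classical
  obtain ⟨cH, hHsym, hHnn, hHsupp, hHq⟩ := hex
  set Γ : Finset (Equiv.Perm V) :=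
    Finset.univ.filter (fun J => (∀ u v, c (J u) (J v) = c u v) ∧ K.image J = K) with hΓdef
  have hmemΓ : ∀ J : Equiv.Perm V,
      J ∈ Γ ↔ ((∀ u v, c (J u) (J v) = c u v) ∧ K.image J = K) := by
    intro J; simp [hΓdef]
  have hone : (1 : Equiv.Perm V) ∈ Γ := by
    rw [hmemΓ]; simp
  have hn : (0 : ℝ) < (Γ.card : ℝ) := by
    exact_mod_cast Finset.card_pos.mpr ⟨_, hone⟩
  have hinv : ∀ J : Equiv.Perm V, J ∈ Γ → J⁻¹ ∈ Γ := by
    intro J hJ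
    rw [hmemΓ] at hJ ⊢
    refine ⟨fun u v => ?_, ?_⟩
    · conv_rhs => rw [← J.apply_symm_apply u, ← J.apply_symm_apply v, hJ.1]
      rfl
    · conv_lhs => rw [← hJ.2]
      rw [Finset.image_image, show (⇑J⁻¹ ∘ ⇑J) = id from funext fun y => J.symm_apply_apply y,
        Finset.image_id]
  have hmul : ∀ J₁ J₂ : Equiv.Perm V, J₁ ∈ Γ → J₂ ∈ Γ → J₁ * J₂ ∈ Γ := by
    intro J₁ J₂ h₁ h₂
    rw [hmemΓ] at h₁ h₂ ⊢
    refine ⟨fun u v => ?_, ?_⟩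
    · simp only [Equiv.Perm.mul_apply]
      rw [h₁.1, h₂.1]
    · have : K.image (⇑(J₁ * J₂)) = (K.image J₂).image J₁ := by
        rw [Finset.image_image]; rfl
      rw [this, h₂.2, h₁.2]
  refine ⟨fun a b => (∑ J ∈ Γ, cH (J a) (J b)) / Γ.card, fun a b => ?_, fun a b => ?_,
    ?_, ?_, ?_⟩
  · simp only [hHsym]
  · exact div_nonneg (Finset.sum_nonneg fun J _ => hHnn _ _) hn.le
  · intro a b hab
    by_contra h
    apply hab
    rw [div_eq_zero_iff]
    left
    apply Finset.sum_eq_zero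
    intro J hJ
    by_contra hne
    obtain ⟨ha, hb⟩ := hHsupp _ _ hne
    have hmem : ∀ x, J x ∈ K → x ∈ K := by
      intro x hx
      rw [← ((hmemΓ J).mp hJ).2] at hx
      obtain ⟨y, hy, hyx⟩ := Finset.mem_image.mp hx
      exact (J.injective hyx) ▸ hy
    exact h ⟨hmem a ha, hmem b hb⟩
  · intro U hU
    have hterm : ∀ J ∈ Γ, termCut c K U ≤ cutFun cH (U.image J) ∧
        cutFun cH (U.image J) ≤ α * termCut c K U := by
      intro J hJ
      rw [hmemΓ] at hJ
      have hsub : U.image J ⊆ K := by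
        rw [← hJ.2]; exact Finset.image_subset_image hU
      have := hHq (U.image J) hsub
      rwa [termCut_inv c J hJ.1 K U hJ.2] at this
    have hcut : cutFun (fun a b => (∑ J ∈ Γ, cH (J a) (J b)) / Γ.card) U
        = (∑ J ∈ Γ, cutFun cH (U.image J)) / Γ.card := by
      have h1 : ∀ J ∈ Γ, cutFun cH (U.image J) = ∑ u ∈ U, ∑ v ∈ Uᶜ, cH (J u) (J v) :=
        fun J _ => (cutFun_comp cH J U).symm
      rw [Finset.sum_congr rfl h1]
      unfold cutFun
      show ∑ u ∈ U, ∑ v ∈ Uᶜ, (∑ J ∈ Γ, cH (J u) (J v)) / (Γ.card : ℝ) = _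
      simp only [← Finset.sum_div]
      congr 1
      conv_rhs => rw [Finset.sum_comm]
      refine Finset.sum_congr rfl fun u _ => ?_
      rw [Finset.sum_comm]
    rw [hcut]
    constructor
    · rw [le_div_iff₀ hn, mul_comm]
      calc (Γ.card : ℝ) * termCut c K U = ∑ _J ∈ Γ, termCut c K U := by
            rw [Finset.sum_const, nsmul_eq_mul]
        _ ≤ ∑ J ∈ Γ, cutFun cH (U.image J) :=
            Finset.sum_le_sum fun J hJ => (hterm J hJ).1
    · rw [div_le_iff₀ hn, mul_comm (α * termCut c K U)]
      calc ∑ J ∈ Γ, cutFun cH (U.image J) ≤ ∑ _J ∈ Γ, α * termCut c K U :=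
            Finset.sum_le_sum fun J hJ => (hterm J hJ).2
        _ = (Γ.card : ℝ) * (α * termCut c K U) := by rw [Finset.sum_const, nsmul_eq_mul]
  · intro J₀ hc0 hK0 a _ b _
    have hJ₀ : J₀ ∈ Γ := (hmemΓ J₀).mpr ⟨hc0, hK0⟩
    have key : ∑ J ∈ Γ, cH (J (J₀ a)) (J (J₀ b)) = ∑ J ∈ Γ, cH (J a) (J b) := by
      refine Finset.sum_equiv (Equiv.mulRight J₀) (fun J => ?_) (fun J _ => rfl)
      constructor
      · intro hJ
        exact hmul J J₀ hJ hJ₀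
      · intro hJ
        have := hmul (J * J₀) J₀⁻¹ hJ (hinv J₀ hJ₀)
        simpa using this
    show (∑ J ∈ Γ, cH (J (J₀ a)) (J (J₀ b))) / (Γ.card : ℝ)
        = (∑ J ∈ Γ, cH (J a) (J b)) / (Γ.card : ℝ)
    rw [key]
end

section
/- If α is the minimum quality over all cut-sparsifiers for the graph G_d with terminal set K, then there exists a cut-sparsifier H for (G_d, K) of quality at most α whose capacities depend only on Hamming distance: c_H(z_s, z_t) = c_H(z_{s'}, z_{t'}) whenever Hamm(s,t) = Hamm(s',t'). -/
open Finset

/-! ### Auxiliary development: the hyperoctahedral symmetry group of the cube -/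

namespace HammAux

variable {d : ℕ}

/-- Index type for the symmetry group: a coordinate permutation and a translation. -/
abbrev Idx (d : ℕ) := Equiv.Perm (Fin d) × Cube d

/-- Action of a symmetry on the cube. -/
def act (g : Idx d) (s : Cube d) : Cube d := fun i => xor (s (g.1.symm i)) (g.2 i)

/-- Inverse of a symmetry. -/
def ginv (g : Idx d) : Idx d := (g.1.symm, fun i => g.2 (g.1 i))

lemma xor_cancel_left (a b : Bool) : xor a (xor a b) = b := by
  cases a <;> cases b <;> rfl

lemma act_ginv (g : Idx d) (s : Cube d) : act (ginv g) (act g s) = s := by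
  funext i
  simp [act, ginv, ← Bool.xor_assoc]

lemma act_ginv' (g : Idx d) (s : Cube d) : act g (act (ginv g) s) = s := by
  funext i
  simp [act, ginv, ← Bool.xor_assoc]

/-- The action as an equivalence. -/
def actE (g : Idx d) : Cube d ≃ Cube d :=
  ⟨act g, act (ginv g), fun s => act_ginv g s, fun s => act_ginv' g s⟩

lemma act_injective (g : Idx d) : Function.Injective (act g) := fun a b h => by
  have := congrArg (act (ginv g)) h
  rwa [act_ginv, act_ginv] at this

lemma hamm_act (g : Idx d) (s t : Cube d) : hamm (act g s) (act g t) = hamm s t := by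
  have key : ∀ a b c : Bool, (xor a c = xor b c) ↔ (a = b) := by decide
  unfold hamm
  have h1 : (univ.filter fun i => act g s i ≠ act g t i)
      = (univ.filter fun i => s i ≠ t i).image g.1 := by
    ext j
    simp only [Finset.mem_filter, Finset.mem_image, Finset.mem_univ, true_and, act, ne_eq, key]
    constructor
    · intro h
      exact ⟨g.1.symm j, h, g.1.apply_symm_apply j⟩
    · rintro ⟨i, hi, rfl⟩
      rwa [Equiv.symm_apply_apply]
  rw [h1, Finset.card_image_of_injective _ g.1.injective]

/-- Composition: `act (gmul g g₀) = act g ∘ act g₀`. -/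
def gmul (g g₀ : Idx d) : Idx d :=
  (g₀.1.trans g.1, fun i => xor (g₀.2 (g.1.symm i)) (g.2 i))

lemma act_gmul (g g₀ : Idx d) (s : Cube d) : act (gmul g g₀) s = act g (act g₀ s) := by
  funext i
  simp [act, gmul, Bool.xor_assoc]

lemma gmul_cancel (g g₀ : Idx d) : gmul (gmul g g₀) (ginv g₀) = g := by
  refine Prod.ext ?_ ?_
  · ext x; simp [gmul, ginv]
  · funext i; simp [gmul, ginv, ← Bool.xor_assoc]

lemma gmul_cancel' (g g₀ : Idx d) : gmul (gmul g (ginv g₀)) g₀ = g := by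
  refine Prod.ext ?_ ?_
  · ext x; simp [gmul, ginv]
  · funext i; simp [gmul, ginv, ← Bool.xor_assoc]

/-- Right translation by `g₀` as an equivalence of the index type. -/
def gmulE (g₀ : Idx d) : Idx d ≃ Idx d :=
  ⟨fun g => gmul g g₀, fun g => gmul g (ginv g₀),
    fun g => gmul_cancel g g₀, fun g => gmul_cancel' g g₀⟩

/-- Transitivity on pairs of equal Hamming distance. -/
lemma exists_act_eq (s t s' t' : Cube d) (h : hamm s t = hamm s' t') :
    ∃ g : Idx d, act g s = s' ∧ act g t = t' := by
  classical
  have hcard : (univ.filter fun i => s i ≠ t i).card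
      = (univ.filter fun i => s' i ≠ t' i).card := h
  set D := univ.filter fun i => s i ≠ t i with hDdef
  set D' := univ.filter fun i => s' i ≠ t' i with hD'def
  have hcardc : (Dᶜ).card = (D'ᶜ).card := by
    simp [Finset.card_compl, hcard]
  let e1 : {x // x ∈ D} ≃ {x // x ∈ D'} := Finset.equivOfCardEq hcard
  let e2 : {x // ¬ x ∈ D} ≃ {x // ¬ x ∈ D'} :=
    ((Equiv.subtypeEquivRight (fun x => (Finset.mem_compl (s := D)).symm)).trans
      (Finset.equivOfCardEq hcardc)).trans
      (Equiv.subtypeEquivRight (fun x => Finset.mem_compl))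
  let π : Equiv.Perm (Fin d) :=
    ((Equiv.sumCompl (· ∈ D)).symm.trans (e1.sumCongr e2)).trans
      (Equiv.sumCompl (· ∈ D'))
  have hπ : ∀ j, (j ∈ D ↔ π j ∈ D') := by
    intro j
    by_cases hj : j ∈ D
    · simp only [π, Equiv.trans_apply,
        Equiv.sumCompl_symm_apply_of_pos hj, Equiv.sumCongr_apply, Sum.map_inl,
        Equiv.sumCompl_apply_inl]
      exact iff_of_true hj (e1 ⟨j, hj⟩).2
    · simp only [π, Equiv.trans_apply,
        Equiv.sumCompl_symm_apply_of_neg hj, Equiv.sumCongr_apply, Sum.map_inr,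
        Equiv.sumCompl_apply_inr]
      exact iff_of_false hj (e2 ⟨j, hj⟩).2
  refine ⟨(π, fun i => xor (s (π.symm i)) (s' i)), ?_, ?_⟩
  · funext i
    simp [act, xor_cancel_left]
  · funext i
    have hji : π (π.symm i) = i := π.apply_symm_apply i
    have hiff : (s (π.symm i) ≠ t (π.symm i)) ↔ (s' i ≠ t' i) := by
      have := hπ (π.symm i)
      rw [hji] at this
      simpa [hDdef, hD'def, Finset.mem_filter] using this
    have key : ∀ b1 b2 b3 b4 : Bool,
        ((b1 ≠ b2) ↔ (b3 ≠ b4)) → xor b2 (xor b1 b3) = b4 := by decide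
    exact key _ _ _ _ hiff

lemma image_compl {V : Type*} [Fintype V] [DecidableEq V] (e : V ≃ V) (A : Finset V) :
    (A.image e)ᶜ = Aᶜ.image e := by
  ext x
  simp only [Finset.mem_compl, Finset.mem_image]
  constructor
  · intro h
    exact ⟨e.symm x, fun hm => h ⟨_, hm, e.apply_symm_apply x⟩, e.apply_symm_apply x⟩
  · rintro ⟨a, ha, rfl⟩ ⟨b, hb, hba⟩
    exact ha (e.injective hba ▸ hb)

lemma cutFun_image {V : Type*} [Fintype V] [DecidableEq V] (e : V ≃ V)
    (c : V → V → ℝ) (A : Finset V) :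
    cutFun c (A.image e) = cutFun (fun u v => c (e u) (e v)) A := by
  unfold cutFun
  rw [image_compl, Finset.sum_image (fun x _ y _ h => e.injective h)]
  refine Finset.sum_congr rfl fun u _ => ?_
  rw [Finset.sum_image (fun x _ y _ h => e.injective h)]

lemma image_univ_act (g : Idx d) : (univ : Finset (Cube d)).image (act g) = univ := by
  ext x
  simp only [Finset.mem_image, Finset.mem_univ, true_and, iff_true]
  exact ⟨act (ginv g) x, act_ginv' g x⟩

lemma gCap_invariant (g : Idx d) (u v : Vtx d) :
    gCap d (Sum.map (act g) (act g) u) (Sum.map (act g) (act g) v) = gCap d u v := by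
  cases u <;> cases v <;>
    simp [gCap, hamm_act, (act_injective g).eq_iff]

lemma hK_set_subset (g : Idx d) (U : Finset (Cube d)) :
    {x : ℝ | ∃ A, A ∩ Kset d = U.image Sum.inr ∧ cutFun (gCap d) A = x} ⊆
    {x : ℝ | ∃ A, A ∩ Kset d = (U.image (act g)).image Sum.inr ∧ cutFun (gCap d) A = x} := by
  rintro x ⟨A, hA, rfl⟩
  classical
  set E : Vtx d ≃ Vtx d := Equiv.sumCongr (actE g) (actE g) with hE
  have hEcoe : ∀ w : Vtx d, E w = Sum.map (act g) (act g) w := by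
    intro w; cases w <;> rfl
  have hKimg : (Kset d).image E = Kset d := by
    unfold Kset
    rw [Finset.image_image]
    have h1 : (⇑E ∘ Sum.inr : Cube d → Vtx d) = Sum.inr ∘ act g := by
      funext x; exact hEcoe (Sum.inr x)
    rw [h1, ← Finset.image_image, image_univ_act]
  refine ⟨A.image E, ?_, ?_⟩
  · rw [show (Kset d) = (Kset d).image E from hKimg.symm,
      ← Finset.image_inter _ _ E.injective, hA, Finset.image_image, Finset.image_image]
    congr 1
  · rw [cutFun_image E]
    unfold cutFun
    refine Finset.sum_congr rfl fun u _ => Finset.sum_congr rfl fun v _ => ?_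
    show gCap d (E u) (E v) = gCap d u v
    rw [hEcoe u, hEcoe v, gCap_invariant]

lemma hK_image_act (g : Idx d) (U : Finset (Cube d)) :
    hK d (U.image (act g)) = hK d U := by
  unfold hK termCut
  congr 1
  apply Set.Subset.antisymm
  · have himg : (U.image (act g)).image (act (ginv g)) = U := by
      rw [Finset.image_image,
        (show (act (ginv g)) ∘ (act g) = id from funext fun s => act_ginv g s),
        Finset.image_id]
    have h := hK_set_subset (ginv g) (U.image (act g))
    rwa [himg] at h
  · exact hK_set_subset g U

end HammAux

/-- If `(G_d, K)` admits a cut-sparsifier of quality at most `α` (in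
particular if `α` is the minimum quality over all cut-sparsifiers), then it admits a
cut-sparsifier of quality at most `α` whose capacities depend only on the Hamming
distance between the endpoints. -/
theorem hamming_invariant_sparsifier (d : ℕ) (α : ℝ)
    (hex : ∃ cH : Cube d → Cube d → ℝ,
      (∀ s t, cH s t = cH t s) ∧ (∀ s t, 0 ≤ cH s t) ∧
      ∀ U : Finset (Cube d), hK d U ≤ cutFun cH U ∧ cutFun cH U ≤ α * hK d U) :
    ∃ cH : Cube d → Cube d → ℝ,
      (∀ s t, cH s t = cH t s) ∧ (∀ s t, 0 ≤ cH s t) ∧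
      (∀ U : Finset (Cube d), hK d U ≤ cutFun cH U ∧ cutFun cH U ≤ α * hK d U) ∧
      (∀ s t s' t' : Cube d, hamm s t = hamm s' t' → cH s t = cH s' t') := by
  classical
  obtain ⟨c0, hs, hn, hb⟩ := hex
  set N : ℝ := (Fintype.card (HammAux.Idx d) : ℝ) with hN
  have hNpos : (0 : ℝ) < N := by
    rw [hN]; exact_mod_cast Fintype.card_pos
  set cH' : Cube d → Cube d → ℝ :=
    fun s t => (∑ g : HammAux.Idx d, c0 (HammAux.act g s) (HammAux.act g t)) / N with hcH'
  refine ⟨cH', ?_, ?_, ?_, ?_⟩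
  · intro s t
    simp only [hcH']
    exact congrArg (· / N) (Finset.sum_congr rfl fun g _ => hs _ _)
  · intro s t
    simp only [hcH']
    exact div_nonneg (Finset.sum_nonneg fun g _ => hn _ _) hNpos.le
  · intro U
    have hcut : ∀ g : HammAux.Idx d,
        (∑ u ∈ U, ∑ v ∈ Uᶜ, c0 (HammAux.act g u) (HammAux.act g v))
          = cutFun c0 (U.image (HammAux.act g)) := by
      intro g
      rw [show U.image (HammAux.act g) = U.image ⇑(HammAux.actE g) from rfl,
        HammAux.cutFun_image]
      rfl
    have key : cutFun cH' U
        = (∑ g : HammAux.Idx d, cutFun c0 (U.image (HammAux.act g))) / N := by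
      have h1 : cutFun cH' U
          = (∑ u ∈ U, ∑ v ∈ Uᶜ, ∑ g : HammAux.Idx d,
              c0 (HammAux.act g u) (HammAux.act g v)) / N := by
        unfold cutFun
        simp only [hcH', ← Finset.sum_div]
      rw [h1]
      congr 1
      calc ∑ u ∈ U, ∑ v ∈ Uᶜ, ∑ g : HammAux.Idx d, c0 (HammAux.act g u) (HammAux.act g v)
          = ∑ u ∈ U, ∑ g : HammAux.Idx d, ∑ v ∈ Uᶜ, c0 (HammAux.act g u) (HammAux.act g v) :=
            Finset.sum_congr rfl fun u _ => Finset.sum_comm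
        _ = ∑ g : HammAux.Idx d, ∑ u ∈ U, ∑ v ∈ Uᶜ, c0 (HammAux.act g u) (HammAux.act g v) :=
            Finset.sum_comm
        _ = ∑ g : HammAux.Idx d, cutFun c0 (U.image (HammAux.act g)) :=
            Finset.sum_congr rfl fun g _ => hcut g
    have hterm : ∀ g : HammAux.Idx d,
        hK d U ≤ cutFun c0 (U.image (HammAux.act g)) ∧
          cutFun c0 (U.image (HammAux.act g)) ≤ α * hK d U := by
      intro g
      have := hb (U.image (HammAux.act g))
      rwa [HammAux.hK_image_act] at this
    constructor
    · rw [key, le_div_iff₀ hNpos]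
      calc hK d U * N = ∑ _g : HammAux.Idx d, hK d U := by
            rw [Finset.sum_const, Finset.card_univ, nsmul_eq_mul, hN, mul_comm]
        _ ≤ ∑ g : HammAux.Idx d, cutFun c0 (U.image (HammAux.act g)) :=
            Finset.sum_le_sum fun g _ => (hterm g).1
    · rw [key, div_le_iff₀ hNpos]
      calc ∑ g : HammAux.Idx d, cutFun c0 (U.image (HammAux.act g))
          ≤ ∑ _g : HammAux.Idx d, α * hK d U :=
            Finset.sum_le_sum fun g _ => (hterm g).2
        _ = α * hK d U * N := by
            rw [Finset.sum_const, Finset.card_univ, nsmul_eq_mul, hN, mul_comm]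
  · intro s t s' t' hst
    obtain ⟨g₀, hgs, hgt⟩ := HammAux.exists_act_eq s t s' t' hst
    have hsum : (∑ g : HammAux.Idx d, c0 (HammAux.act g s') (HammAux.act g t'))
        = ∑ g : HammAux.Idx d, c0 (HammAux.act g s) (HammAux.act g t) := by
      refine Fintype.sum_equiv (HammAux.gmulE g₀)
        (fun g => c0 (HammAux.act g s') (HammAux.act g t'))
        (fun g => c0 (HammAux.act g s) (HammAux.act g t)) fun g => ?_
      show c0 (HammAux.act g s') (HammAux.act g t')
        = c0 (HammAux.act (HammAux.gmul g g₀) s) (HammAux.act (HammAux.gmul g g₀) t)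
      rw [HammAux.act_gmul, HammAux.act_gmul, hgs, hgt]
    simp only [hcH']
    rw [hsum]
end
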